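/- The number of hwise-fixed-5-spaces is exactly g; that is, there are exactly g six-dimensional F-subspaces W of V with σ(W) = W such that the F-linear map induced by σ on the quotient V/W is multiplication by a scalar. -/

import Mathlib

open Module

noncomputable section

/-- The ambient 9-dimensional space `V = K³` (an `F`-space when `K` is an `F`-algebra). -/
abbrev VK (K : Type*) := K × K × K

/-- The semilinear map `σ(x,y,z) = (z^q, x^q, y^q)` of `V = K³`. -/
def sig (q : ℕ) {K : Type*} [Field K] (v : VK K) : VK K :=
  (v.2.2 ^ q, v.1 ^ q, v.2.1 ^ q)

/-- The S-plane through `v`, i.e. the 3-dimensional `F`-subspace `K·v`. -/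
def Splane (F : Type*) [Field F] {K : Type*} [Field K] [Algebra F K]
    (v : VK K) : Submodule F (VK K) :=
  Submodule.restrictScalars F (Submodule.span K {v})

/-- `[v]` is a fixed point: `σ(v) ∈ F·v`. -/
def IsFixedPt (F : Type*) [Field F] {K : Type*} [Field K] [Algebra F K]
    (q : ℕ) (v : VK K) : Prop :=
  sig q v ∈ Submodule.span F {v}

/-- `[v]` has collinear orbit: the `F`-span of `{v, σv, σ²v}` is 2-dimensional. -/
def Collin (F : Type*) [Field F] {K : Type*} [Field K] [Algebra F K]
    (q : ℕ) (v : VK K) : Prop :=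
  finrank F (Submodule.span F {v, sig q v, sig q (sig q v)}) = 2

/-- `[v]` has triangle orbit: `v, σv, σ²v` are `F`-linearly independent. -/
def Triangle (F : Type*) [Field F] {K : Type*} [Field K] [Algebra F K]
    (q : ℕ) (v : VK K) : Prop :=
  LinearIndependent F ![v, sig q v, sig q (sig q v)]

/-- The S-plane `K·v` has Type I: `σ(v) ∈ K·v`. -/
def TypeI {K : Type*} [Field K] (q : ℕ) (v : VK K) : Prop :=
  sig q v ∈ Submodule.span K {v}

/-- The S-plane `K·v` has Type II: `v, σv, σ²v` `K`-dependent but `σ(v) ∉ K·v`. -/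
def TypeII {K : Type*} [Field K] (q : ℕ) (v : VK K) : Prop :=
  ¬ LinearIndependent K ![v, sig q v, sig q (sig q v)] ∧
    sig q v ∉ Submodule.span K {v}

/-- The S-plane `K·v` has Type III: `v, σv, σ²v` are `K`-linearly independent. -/
def TypeIII {K : Type*} [Field K] (q : ℕ) (v : VK K) : Prop :=
  LinearIndependent K ![v, sig q v, sig q (sig q v)]

/-- `σ` acts on the subspace `W` as multiplication by a scalar of `F`. -/
def ScalarOn {F : Type*} [Field F] {K : Type*} [Field K] [Algebra F K]
    (q : ℕ) (W : Submodule F (VK K)) : Prop :=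
  ∃ c : F, ∀ v ∈ W, sig q v = c • v

/-- A pointwise-fixed plane: 3-dimensional `F`-subspace on which `σ` acts as a scalar. -/
def PtwisePlane {F : Type*} [Field F] {K : Type*} [Field K] [Algebra F K]
    (q : ℕ) (W : Submodule F (VK K)) : Prop :=
  finrank F W = 3 ∧ ScalarOn q W

/-- A fixed line: 2-dimensional `F`-subspace `L` with `σ(L) = L`. -/
def FixedLine {F : Type*} [Field F] {K : Type*} [Field K] [Algebra F K]
    (q : ℕ) (L : Submodule F (VK K)) : Prop :=
  finrank F L = 2 ∧ sig q '' (L : Set (VK K)) = (L : Set (VK K))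

/-- A pointwise-fixed line: fixed line on which `σ` acts as a scalar. -/
def PtwiseLine {F : Type*} [Field F] {K : Type*} [Field K] [Algebra F K]
    (q : ℕ) (L : Submodule F (VK K)) : Prop :=
  FixedLine q L ∧ ScalarOn q L

/-- A fixed-I-line: fixed line, not scalar, contained in some `K·v`. -/
def FixedILine {F : Type*} [Field F] {K : Type*} [Field K] [Algebra F K]
    (q : ℕ) (L : Submodule F (VK K)) : Prop :=
  FixedLine q L ∧ ¬ ScalarOn q L ∧ ∃ v : VK K, v ≠ 0 ∧ L ≤ Splane F v

/-- A fixed-II-line: fixed line, not scalar, contained in no `K·v`. -/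
def FixedIILine {F : Type*} [Field F] {K : Type*} [Field K] [Algebra F K]
    (q : ℕ) (L : Submodule F (VK K)) : Prop :=
  FixedLine q L ∧ ¬ ScalarOn q L ∧ ¬ ∃ v : VK K, v ≠ 0 ∧ L ≤ Splane F v

/-- A hwise-fixed-5-space: 6-dimensional `F`-subspace `W` with `σ(W) = W` such that the
map induced by `σ` on `V/W` is multiplication by a scalar. -/
def HFix5 {F : Type*} [Field F] {K : Type*} [Field K] [Algebra F K]
    (q : ℕ) (W : Submodule F (VK K)) : Prop :=
  finrank F W = 6 ∧ sig q '' (W : Set (VK K)) = (W : Set (VK K)) ∧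
    ∃ c : F, ∀ v : VK K, sig q v - c • v ∈ W

/-- An `H_I`-5-space: a 2-dimensional `K`-subspace `U` of `V` with `σ(U) = U`. -/
def HI5 {K : Type*} [Field K] (q : ℕ) (U : Submodule K (VK K)) : Prop :=
  finrank K U = 2 ∧ sig q '' (U : Set (VK K)) = (U : Set (VK K))

section StmtAux

variable (F : Type*) [Field F] {K : Type*} [Field K] [Algebra F K]

/-- `x ↦ x^q` as an `F`-linear endomorphism of `K`. -/
def pqL (q : ℕ) (hadd : ∀ a b : K, (a + b) ^ q = a ^ q + b ^ q)
    (hsm : ∀ (c : F) (a : K), (c • a) ^ q = c • a ^ q) : K →ₗ[F] K where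
  toFun a := a ^ q
  map_add' := hadd
  map_smul' := hsm

/-- `sig q` as an `F`-linear endomorphism of `VK K`. -/
def sigLin (q : ℕ) (hadd : ∀ a b : K, (a + b) ^ q = a ^ q + b ^ q)
    (hsm : ∀ (c : F) (a : K), (c • a) ^ q = c • a ^ q) : VK K →ₗ[F] VK K where
  toFun := sig q
  map_add' v w := by
    show sig q (v + w) = sig q v + sig q w
    simp [sig, Prod.ext_iff, hadd]
  map_smul' c v := by
    show sig q (c • v) = c • sig q v
    simp [sig, Prod.ext_iff, hsm]

@[simp] lemma sigLin_apply (q : ℕ) (hadd) (hsm) (v : VK K) :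
    sigLin F q hadd hsm v = sig q v := rfl

end StmtAux

/-- the number of hwise-fixed-5-spaces is exactly g. -/
theorem stmt2 (q : ℕ) (hq : 2 < q)
    (F : Type*) [Field F] [Fintype F] (K : Type*) [Field K] [Fintype K]
    [Algebra F K] (hF : Fintype.card F = q) (hK : Fintype.card K = q ^ 3) :
    Nat.card {W : Submodule F (VK K) // HFix5 q W} = Nat.gcd 3 (q - 1) := by
  classical
  have hq2 : 2 ≤ q := le_of_lt hq
  -- characteristic facts
  obtain ⟨n, hp, hFn⟩ := FiniteField.card F (ringChar F)
  haveI : Fact (ringChar F).Prime := ⟨hp⟩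
  haveI : CharP K (ringChar F) := charP_of_injective_algebraMap (algebraMap F K).injective _
  have hqpn : q = ringChar F ^ (n : ℕ) := by rw [← hF, hFn]
  have hadd : ∀ a b : K, (a + b) ^ q = a ^ q + b ^ q := by
    intro a b; rw [hqpn]; exact add_pow_char_pow ..
  have hcq : ∀ c : F, c ^ q = c := fun c => by rw [← hF]; exact FiniteField.pow_card c
  have hsm : ∀ (c : F) (a : K), (c • a) ^ q = c • a ^ q := by
    intro c a
    rw [Algebra.smul_def, mul_pow, ← map_pow, hcq, ← Algebra.smul_def]
  have hpow3 : ∀ x : K, ((x ^ q) ^ q) ^ q = x := by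
    intro x
    rw [← pow_mul, ← pow_mul, show q * (q * q) = q ^ 3 from by ring, ← hK]
    exact FiniteField.pow_card x
  -- dimension facts
  haveI : FiniteDimensional F K := Module.finite_iff_finite.mpr inferInstance
  have hfK : finrank F K = 3 := by
    have h := card_eq_pow_finrank (K := F) (V := K)
    rw [hF, hK] at h
    exact (Nat.pow_right_injective hq2 h.symm)
  have hfV : finrank F (VK K) = 9 := by
    show finrank F (K × K × K) = 9
    rw [Module.finrank_prod, Module.finrank_prod, hfK]
  -- the linear maps
  let T : VK K →ₗ[F] VK K := sigLin F q hadd hsm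
  have hT3 : ∀ v : VK K, T (T (T v)) = v := by
    intro v
    show sig q (sig q (sig q v)) = v
    exact Prod.ext (hpow3 _) (Prod.ext (hpow3 _) (hpow3 _))
  let S : F → (VK K →ₗ[F] VK K) := fun c => T - c • LinearMap.id
  have hS : ∀ (c : F) (v : VK K), S c v = sig q v - c • v := fun c v => rfl
  -- kernel dimension
  have hker3 : ∀ c : F, c ^ 3 = 1 → finrank F (LinearMap.ker (S c)) = 3 := by
    intro c hc3
    let Pq : K →ₗ[F] K := pqL F q hadd hsm
    let e : K →ₗ[F] VK K :=
      LinearMap.prod LinearMap.id (LinearMap.prod ((c ^ 2) • Pq) (c • (Pq ∘ₗ Pq)))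
    have heapp : ∀ x : K, e x = (x, c ^ 2 • x ^ q, c • (x ^ q) ^ q) := fun x => rfl
    have hrange : LinearMap.range e = LinearMap.ker (S c) := by
      ext v
      simp only [LinearMap.mem_range, LinearMap.mem_ker]
      constructor
      · rintro ⟨x, rfl⟩
        show sig q (e x) - c • (e x) = 0
        rw [sub_eq_zero, heapp]
        show ((c • (x ^ q) ^ q) ^ q, x ^ q, (c ^ 2 • x ^ q) ^ q)
            = c • (x, c ^ 2 • x ^ q, c • (x ^ q) ^ q)
        refine Prod.ext ?_ (Prod.ext ?_ ?_)
        · show (c • (x ^ q) ^ q) ^ q = c • x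
          rw [hsm, hpow3]
        · show x ^ q = c • (c ^ 2 • x ^ q)
          rw [smul_smul, ← pow_succ', hc3, one_smul]
        · show (c ^ 2 • x ^ q) ^ q = c • (c • (x ^ q) ^ q)
          rw [hsm, smul_smul, ← pow_two]
      · intro hv
        have hv' : sig q v = c • v := by
          have := hv
          rw [hS, sub_eq_zero] at this
          exact this
        have h1 : v.1 ^ q = c • v.2.1 := congrArg (fun w => w.2.1) hv'
        have h3 : v.2.1 ^ q = c • v.2.2 := congrArg (fun w => w.2.2) hv'
        refine ⟨v.1, ?_⟩
        rw [heapp]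
        refine Prod.ext rfl (Prod.ext ?_ ?_)
        · show c ^ 2 • v.1 ^ q = v.2.1
          rw [h1, smul_smul, ← pow_succ, hc3, one_smul]
        · show c • (v.1 ^ q) ^ q = v.2.2
          rw [h1, hsm, h3, smul_smul, smul_smul,
            show c * c * c = c ^ 3 from by ring, hc3, one_smul]
    have einj : Function.Injective e := by
      intro a b hab
      exact congrArg Prod.fst hab
    rw [← hrange, LinearMap.finrank_range_of_inj einj, hfK]
  -- range dimension
  have hrank6 : ∀ c : F, c ^ 3 = 1 → finrank F (LinearMap.range (S c)) = 6 := by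
    intro c hc3
    have h := LinearMap.finrank_range_add_finrank_ker (S c)
    rw [hfV, hker3 c hc3] at h
    omega
  -- commutation
  have hcomm : ∀ (c : F) (v : VK K), T (S c v) = S c (T v) := by
    intro c v
    calc T (S c v) = T (T v - c • v) := rfl
      _ = T (T v) - c • T v := by rw [map_sub, map_smul]
      _ = S c (T v) := rfl
  -- ranges are hwise-fixed 5-spaces
  have hfix : ∀ c : F, c ^ 3 = 1 → HFix5 q (LinearMap.range (S c)) := by
    intro c hc3
    refine ⟨hrank6 c hc3, ?_, c, fun v => ⟨v, rfl⟩⟩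
    apply Set.ext
    intro y
    constructor
    · rintro ⟨w, hw, rfl⟩
      simp only [SetLike.mem_coe, LinearMap.mem_range] at hw ⊢
      obtain ⟨u, rfl⟩ := hw
      exact ⟨T u, (hcomm c u).symm⟩
    · intro hy
      simp only [SetLike.mem_coe, LinearMap.mem_range] at hy
      obtain ⟨u, rfl⟩ := hy
      refine ⟨S c (T (T u)), ⟨T (T u), rfl⟩, ?_⟩
      exact (hcomm c (T (T u))).trans (by rw [hT3 u])
  -- converse: every hwise-fixed 5-space is such a range
  have hconv : ∀ W : Submodule F (VK K), HFix5 q W →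
      ∃ c : F, c ^ 3 = 1 ∧ W = LinearMap.range (S c) := by
    rintro W ⟨h6, himg, c, hc⟩
    have hle : LinearMap.range (S c) ≤ W := by
      rintro x ⟨v, rfl⟩
      exact hc v
    have hc3 : c ^ 3 = 1 := by
      by_contra h
      have hWtop : W = ⊤ := by
        rw [eq_top_iff]
        intro v _
        have key : S c (T (T v) + c • T v + c ^ 2 • v) = (1 - c ^ 3) • v := by
          have h1 : T (T (T v)) = v := hT3 v
          show T (T (T v) + c • T v + c ^ 2 • v)
              - c • (T (T v) + c • T v + c ^ 2 • v) = (1 - c ^ 3) • v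
          rw [map_add, map_add, map_smul, map_smul, h1]
          module
        have hv : (1 - c ^ 3) • v ∈ W := key ▸ hle ⟨_, rfl⟩
        have hne : (1 - c ^ 3) ≠ 0 := sub_ne_zero.mpr (Ne.symm h)
        have h2 := W.smul_mem (1 - c ^ 3)⁻¹ hv
        rwa [smul_smul, inv_mul_cancel₀ hne, one_smul] at h2
      rw [hWtop, finrank_top, hfV] at h6
      omega
    refine ⟨c, hc3, ?_⟩
    exact (Submodule.eq_of_le_of_finrank_eq hle (by rw [hrank6 c hc3, h6])).symm
  -- the bijection with cube roots of unity
  let f : {c : F // c ^ 3 = 1} → {W : Submodule F (VK K) // HFix5 q W} :=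
    fun c => ⟨LinearMap.range (S c.1), hfix c.1 c.2⟩
  have hfbij : Function.Bijective f := by
    constructor
    · rintro ⟨c, hc⟩ ⟨c', hc'⟩ hcc
      refine Subtype.ext ?_
      by_contra hne
      have hWW : LinearMap.range (S c) = LinearMap.range (S c') :=
        congrArg Subtype.val hcc
      have htop : ∀ v : VK K, v ∈ LinearMap.range (S c) := by
        intro v
        have m1 : S c v ∈ LinearMap.range (S c) := ⟨v, rfl⟩
        have m2 : S c' v ∈ LinearMap.range (S c) := by
          rw [hWW]; exact ⟨v, rfl⟩
        have m3 : S c v - S c' v ∈ LinearMap.range (S c) :=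
          Submodule.sub_mem _ m1 m2
        have heq : S c v - S c' v = (c' - c) • v := by
          show (T v - c • v) - (T v - c' • v) = (c' - c) • v
          rw [sub_smul]
          abel
        rw [heq] at m3
        have hone : (c' - c) ≠ 0 := sub_ne_zero.mpr (fun h => hne h.symm)
        have h2 := Submodule.smul_mem _ (c' - c)⁻¹ m3
        rwa [smul_smul, inv_mul_cancel₀ hone, one_smul] at h2
      have htop' : LinearMap.range (S c) = ⊤ := eq_top_iff.mpr fun v _ => htop v
      have h9 := hrank6 c hc
      rw [htop', finrank_top, hfV] at h9
      omega
    · rintro ⟨W, hW⟩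
      obtain ⟨c, hc3, hWeq⟩ := hconv W hW
      exact ⟨⟨c, hc3⟩, Subtype.ext hWeq.symm⟩
  rw [← Nat.card_eq_of_bijective f hfbij]
  -- counting cube roots of unity in F
  set d := Nat.gcd 3 (q - 1) with hd
  have hdq : d ∣ q - 1 := Nat.gcd_dvd_right _ _
  have hd3 : d ∣ 3 := Nat.gcd_dvd_left _ _
  haveI : NeZero d := ⟨Nat.gcd_ne_zero_left (by norm_num)⟩
  have hcardU : Fintype.card Fˣ = q - 1 := by rw [Fintype.card_units, hF]
  have hiff : ∀ u : Fˣ, u ^ 3 = 1 ↔ u ^ d = 1 := by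
    intro u
    constructor
    · intro h
      have h1 : orderOf u ∣ 3 := orderOf_dvd_of_pow_eq_one h
      have h2 : orderOf u ∣ q - 1 := hcardU ▸ orderOf_dvd_card
      exact orderOf_dvd_iff_pow_eq_one.mp (Nat.dvd_gcd h1 h2)
    · intro h
      obtain ⟨k, hk⟩ := hd3
      rw [hk, pow_mul, h, one_pow]
  have hd_dvd_card : d ∣ Fintype.card Fˣ := hcardU ▸ hdq
  have hexists : ∃ ζ : Fˣ, orderOf ζ = d := by
    have h := IsCyclic.card_orderOf_eq_totient (α := Fˣ) hd_dvd_card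
    have hpos : 0 < Nat.totient d :=
      Nat.totient_pos.mpr (Nat.pos_of_ne_zero (NeZero.ne d))
    rw [← h] at hpos
    obtain ⟨ζ, hζ⟩ := Finset.card_pos.mp hpos
    exact ⟨ζ, (Finset.mem_filter.mp hζ).2⟩
  obtain ⟨ζ, hζ⟩ := hexists
  have hprim : IsPrimitiveRoot ζ d := hζ ▸ IsPrimitiveRoot.orderOf ζ
  have hcardroots : Fintype.card (rootsOfUnity d F) = d := by
    rw [← Nat.card_eq_fintype_card]; exact hprim.card_rootsOfUnity'
  have hne0 : ∀ c : {c : F // c ^ 3 = 1}, (c : F) ≠ 0 := by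
    rintro ⟨c, hc⟩ h0
    simp only at h0
    rw [h0, zero_pow (by norm_num : (3:ℕ) ≠ 0)] at hc
    exact zero_ne_one hc
  have e1 : {c : F // c ^ 3 = 1} ≃ {u : Fˣ // u ^ 3 = 1} :=
    { toFun := fun c => ⟨Units.mk0 c.1 (hne0 c), Units.ext (by simpa using c.2)⟩
      invFun := fun u => ⟨(u.1 : F), by
        rw [← Units.val_pow_eq_pow_val, u.2, Units.val_one]⟩
      left_inv := fun c => Subtype.ext rfl
      right_inv := fun u => Subtype.ext (Units.ext rfl) }
  have e2 : {u : Fˣ // u ^ 3 = 1} ≃ rootsOfUnity d F :=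
    Equiv.subtypeEquivRight fun u => (hiff u).trans (mem_rootsOfUnity d u).symm
  calc Nat.card {c : F // c ^ 3 = 1} = Nat.card (rootsOfUnity d F) :=
        Nat.card_congr (e1.trans e2)
    _ = d := by rw [Nat.card_eq_fintype_card, hcardroots]
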